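/- Under the assumptions of the previous equivalence (coupled system ↔ minimization), a single sweep of alternating minimization applied to E, starting from (u^{k−1}, q^{k−1}) with p^{k−1} = c₀⁻¹(h − B₁u^{k−1} − B₂q^{k−1}), is equivalent to the stabilized splitting: first find u^k with ⟨Mu^k, v⟩ + (1/c₀)⟨B₁(u^k − u^{k−1}), B₁v⟩ − ⟨p^{k−1}, B₁v⟩ = ⟨f, v⟩ for all v; then find (p^k, q^k) with c₀⟨p^k, r⟩ + ⟨B₁u^k, r⟩ + ⟨B₂q^k, r⟩ = ⟨h, r⟩ for all r, and ⟨Kq^k, w⟩ − ⟨p^k, B₂w⟩ = ⟨g, w⟩ for all w. -/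

import Mathlib

open scoped InnerProductSpace

/-- Criterion for minimality of a quadratic-like functional: if
`F (u + v) = F u + L v + Q v` with `L` homogeneous of degree 1, `Q`
homogeneous of degree 2 and nonnegative, then `u` minimizes `F` iff `L ≡ 0`. -/
lemma quad_crit {H : Type*} [NormedAddCommGroup H] [InnerProductSpace ℝ H]
    (F : H → ℝ) (u : H) (L Q : H → ℝ)
    (hexp : ∀ v, F (u + v) = F u + L v + Q v)
    (hLs : ∀ (t : ℝ) (v : H), L (t • v) = t * L v)
    (hQs : ∀ (t : ℝ) (v : H), Q (t • v) = t ^ 2 * Q v)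
    (hQ : ∀ v, 0 ≤ Q v) :
    (∀ u', F u ≤ F u') ↔ ∀ v, L v = 0 := by
  constructor
  · intro hmin v
    by_contra hL
    set t : ℝ := -L v / (2 * (Q v + 1)) with ht
    have h1 := hmin (u + t • v)
    rw [hexp, hLs, hQs] at h1
    have hq := hQ v
    have hpos : (0:ℝ) < Q v + 1 := by linarith
    have key : t * L v + t ^ 2 * Q v
        = -(L v) ^ 2 * (2 * (Q v + 1) - Q v) / (2 * (Q v + 1)) ^ 2 := by
      rw [ht]; field_simp; ring
    have hnum : -(L v) ^ 2 * (2 * (Q v + 1) - Q v) < 0 := by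
      have h2 : 0 < (L v) ^ 2 := by positivity
      nlinarith
    have hden : (0:ℝ) < (2 * (Q v + 1)) ^ 2 := by positivity
    have : t * L v + t ^ 2 * Q v < 0 := by
      rw [key]; exact div_neg_of_neg_of_pos hnum hden
    linarith
  · intro hL u'
    have := hexp (u' - u)
    rw [hL] at this
    have key : u + (u' - u) = u' := by abel
    rw [key] at this
    have hq := hQ (u' - u)
    linarith

/-- one sweep of alternating minimization applied to
`E(u,q) = ½⟨Mu,u⟩ + ½⟨Kq,q⟩ + (1/2c₀)‖h − B₁u − B₂q‖² − ⟨f,u⟩ − ⟨g,q⟩`,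
starting from `(uold, qold)` with `pold = c₀⁻¹(h − B₁uold − B₂qold)`, is
equivalent to the stabilized (undrained) splitting scheme. -/
theorem alternating_minimization_iff_undrained_split
    {H₁ H₂ K₀ : Type*}
    [NormedAddCommGroup H₁] [InnerProductSpace ℝ H₁] [CompleteSpace H₁]
    [NormedAddCommGroup H₂] [InnerProductSpace ℝ H₂] [CompleteSpace H₂]
    [NormedAddCommGroup K₀] [InnerProductSpace ℝ K₀] [CompleteSpace K₀]
    (M : H₁ →L[ℝ] H₁) (Kop : H₂ →L[ℝ] H₂)
    (hM : IsSelfAdjoint M) (hKop : IsSelfAdjoint Kop)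
    (μM μK : ℝ) (hμM : 0 < μM) (hμK : 0 < μK)
    (hMco : ∀ v : H₁, μM * ‖v‖ ^ 2 ≤ ⟪M v, v⟫_ℝ)
    (hKco : ∀ w : H₂, μK * ‖w‖ ^ 2 ≤ ⟪Kop w, w⟫_ℝ)
    (B₁ : H₁ →L[ℝ] K₀) (B₂ : H₂ →L[ℝ] K₀)
    (c₀ : ℝ) (hc₀ : 0 < c₀) (h : K₀) (f : H₁) (g : H₂)
    (E : H₁ → H₂ → ℝ)
    (hE : ∀ u q, E u q = (1 / 2) * ⟪M u, u⟫_ℝ + (1 / 2) * ⟪Kop q, q⟫_ℝ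
      + (1 / (2 * c₀)) * ‖h - B₁ u - B₂ q‖ ^ 2 - ⟪f, u⟫_ℝ - ⟪g, q⟫_ℝ)
    (uold unew : H₁) (qold qnew : H₂) (pold pnew : K₀)
    (hpold : pold = c₀⁻¹ • (h - B₁ uold - B₂ qold))
    (hpnew : pnew = c₀⁻¹ • (h - B₁ unew - B₂ qnew)) :
    ((∀ u' : H₁, E unew qold ≤ E u' qold) ∧
     (∀ q' : H₂, E unew qnew ≤ E unew q')) ↔
    ((∀ v : H₁, ⟪M unew, v⟫_ℝ + (1 / c₀) * ⟪B₁ (unew - uold), B₁ v⟫_ℝ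
        - ⟪pold, B₁ v⟫_ℝ = ⟪f, v⟫_ℝ) ∧
     (∀ r : K₀, c₀ * ⟪pnew, r⟫_ℝ + ⟪B₁ unew, r⟫_ℝ + ⟪B₂ qnew, r⟫_ℝ
        = ⟪h, r⟫_ℝ) ∧
     (∀ w : H₂, ⟪Kop qnew, w⟫_ℝ - ⟪pnew, B₂ w⟫_ℝ = ⟪g, w⟫_ℝ)) := by
  have hc₀' : c₀ ≠ 0 := ne_of_gt hc₀
  have hMsym : ∀ x y : H₁, ⟪M x, y⟫_ℝ = ⟪x, M y⟫_ℝ := fun x y => hM.isSymmetric x y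
  have hKsym : ∀ x y : H₂, ⟪Kop x, y⟫_ℝ = ⟪x, Kop y⟫_ℝ := fun x y => hKop.isSymmetric x y
  -- the mass-balance equation holds automatically
  have heq2 : ∀ r : K₀, c₀ * ⟪pnew, r⟫_ℝ + ⟪B₁ unew, r⟫_ℝ + ⟪B₂ qnew, r⟫_ℝ
      = ⟪h, r⟫_ℝ := by
    intro r
    rw [hpnew, real_inner_smul_left, inner_sub_left, inner_sub_left]
    field_simp
    ring
  -- expansion for the u-step
  set r₁ : K₀ := h - B₁ unew - B₂ qold with hr₁
  have hu : (∀ u' : H₁, E unew qold ≤ E u' qold) ↔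
      (∀ v : H₁, ⟪M unew, v⟫_ℝ - (1 / c₀) * ⟪r₁, B₁ v⟫_ℝ - ⟪f, v⟫_ℝ = 0) := by
    refine quad_crit (fun u => E u qold) unew
      (fun v => ⟪M unew, v⟫_ℝ - (1 / c₀) * ⟪r₁, B₁ v⟫_ℝ - ⟪f, v⟫_ℝ)
      (fun v => (1 / 2) * ⟪M v, v⟫_ℝ + (1 / (2 * c₀)) * ‖B₁ v‖ ^ 2)
      ?_ ?_ ?_ ?_
    · intro v
      have hdiff : h - B₁ (unew + v) - B₂ qold = r₁ - B₁ v := by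
        rw [hr₁, map_add]; abel
      have hnorm : ‖r₁ - B₁ v‖ ^ 2 = ‖r₁‖ ^ 2 - 2 * ⟪r₁, B₁ v⟫_ℝ + ‖B₁ v‖ ^ 2 :=
        norm_sub_sq_real _ _
      rw [hE, hE, ← hr₁, hdiff, hnorm]
      have hsym2 : ⟪M v, unew⟫_ℝ = ⟪M unew, v⟫_ℝ := by
        rw [hMsym v unew, real_inner_comm]
      simp only [map_add, inner_add_left, inner_add_right]
      rw [hsym2]
      ring
    · intro t v
      simp only [map_smul, inner_smul_left, inner_smul_right, conj_trivial]
      ring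
    · intro t v
      simp only [map_smul, inner_smul_left, inner_smul_right, conj_trivial,
        norm_smul, mul_pow, Real.norm_eq_abs, sq_abs]
      ring
    · intro v
      have h1 : 0 ≤ ⟪M v, v⟫_ℝ := le_trans (by positivity) (hMco v)
      have h2 : 0 ≤ ‖B₁ v‖ ^ 2 := by positivity
      have h3 : 0 < 1 / (2 * c₀) := by positivity
      nlinarith
  -- expansion for the q-step
  set r₂ : K₀ := h - B₁ unew - B₂ qnew with hr₂
  have hq : (∀ q' : H₂, E unew qnew ≤ E unew q') ↔
      (∀ w : H₂, ⟪Kop qnew, w⟫_ℝ - (1 / c₀) * ⟪r₂, B₂ w⟫_ℝ - ⟪g, w⟫_ℝ = 0) := by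
    refine quad_crit (fun q => E unew q) qnew
      (fun w => ⟪Kop qnew, w⟫_ℝ - (1 / c₀) * ⟪r₂, B₂ w⟫_ℝ - ⟪g, w⟫_ℝ)
      (fun w => (1 / 2) * ⟪Kop w, w⟫_ℝ + (1 / (2 * c₀)) * ‖B₂ w‖ ^ 2)
      ?_ ?_ ?_ ?_
    · intro w
      have hdiff : h - B₁ unew - B₂ (qnew + w) = r₂ - B₂ w := by
        rw [hr₂, map_add]; abel
      have hnorm : ‖r₂ - B₂ w‖ ^ 2 = ‖r₂‖ ^ 2 - 2 * ⟪r₂, B₂ w⟫_ℝ + ‖B₂ w‖ ^ 2 :=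
        norm_sub_sq_real _ _
      rw [hE, hE, ← hr₂, hdiff, hnorm]
      have hsym2 : ⟪Kop w, qnew⟫_ℝ = ⟪Kop qnew, w⟫_ℝ := by
        rw [hKsym w qnew, real_inner_comm]
      simp only [map_add, inner_add_left, inner_add_right]
      rw [hsym2]
      ring
    · intro t w
      simp only [map_smul, inner_smul_left, inner_smul_right, conj_trivial]
      ring
    · intro t w
      simp only [map_smul, inner_smul_left, inner_smul_right, conj_trivial,
        norm_smul, mul_pow, Real.norm_eq_abs, sq_abs]
      ring
    · intro w
      have h1 : 0 ≤ ⟪Kop w, w⟫_ℝ := le_trans (by positivity) (hKco w)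
      have h2 : 0 ≤ ‖B₂ w‖ ^ 2 := by positivity
      have h3 : 0 < 1 / (2 * c₀) := by positivity
      nlinarith
  -- identify the linear functionals with the scheme equations
  have hident1 : ∀ v : H₁,
      ⟪M unew, v⟫_ℝ + (1 / c₀) * ⟪B₁ (unew - uold), B₁ v⟫_ℝ - ⟪pold, B₁ v⟫_ℝ
        - ⟪f, v⟫_ℝ
      = ⟪M unew, v⟫_ℝ - (1 / c₀) * ⟪r₁, B₁ v⟫_ℝ - ⟪f, v⟫_ℝ := by
    intro v
    rw [hpold, real_inner_smul_left, hr₁, map_sub]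
    simp only [inner_sub_left]
    field_simp
    ring
  have hident3 : ∀ w : H₂,
      ⟪Kop qnew, w⟫_ℝ - ⟪pnew, B₂ w⟫_ℝ - ⟪g, w⟫_ℝ
      = ⟪Kop qnew, w⟫_ℝ - (1 / c₀) * ⟪r₂, B₂ w⟫_ℝ - ⟪g, w⟫_ℝ := by
    intro w
    rw [hpnew, real_inner_smul_left, hr₂]
    field_simp
  rw [hu, hq]
  constructor
  · rintro ⟨h1, h3⟩
    refine ⟨fun v => by have := hident1 v; have := h1 v; linarith,
      heq2,
      fun w => by have := hident3 w; have := h3 w; linarith⟩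
  · rintro ⟨h1, _, h3⟩
    exact ⟨fun v => by have := hident1 v; have := h1 v; linarith,
      fun w => by have := hident3 w; have := h3 w; linarith⟩
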